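/- Let α ∈ (0,1), 0 < δ < 1, and K large. If u ∈ B_{K,δ} is real-valued and u ∘ T_α ∈ B_{K,δ}, then u is constant almost everywhere. In particular the cohomological equation f = u − u ∘ T_α with f, u ∈ B_{K,δ} has no solution unless f is (a.e. equal to) a constant. -/

import Mathlib

open Set MeasureTheory Filter
open scoped ENNReal

/-- Nakada's α-continued fraction map on `[α-1, α]`. -/
noncomputable def T (α : ℝ) (x : ℝ) : ℝ :=
  if x = 0 then 0 else 1 / |x| - ⌊1 / |x| + 1 - α⌋

/-- The `(K,δ)`-norm of a function on `I_α = [α-1, α]`: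
`sup_{k ≥ K} ( k^{-δ} var_{L_k} g + ∫_{L_k} |g| )`, where
`L_k = [α-1, -1/(k+α)] ∪ [1/(k+α), α]`. -/
noncomputable def kdNorm (α : ℝ) (K : ℕ) (δ : ℝ) (g : ℝ → ℝ) : ℝ≥0∞ :=
  ⨆ k : ℕ, ⨆ _ : K ≤ k,
    (ENNReal.ofReal ((k : ℝ) ^ (-δ)) *
        (eVariationOn g (Icc (1 / (k + α)) α) + eVariationOn g (Icc (α - 1) (-(1 / (k + α))))) +
      ENNReal.ofReal (∫ x in Icc (α - 1) (-(1 / (k + α))) ∪ Icc (1 / (k + α)) α, |g x|))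

/-- Image of a null set under `y ↦ e/(y+t) + c` (with `|e| ≤ 1`, on a region where
`y + t ≥ a > 0`) is null. -/
lemma image_null_aux (e t c a : ℝ) (he : |e| ≤ 1) (ha : 0 < a) {N : Set ℝ}
    (hN : N ⊆ {y : ℝ | a ≤ y + t}) (h0 : volume N = 0) :
    volume ((fun y => e / (y + t) + c) '' N) = 0 := by
  set K : NNReal := (1 / a ^ 2).toNNReal with hK
  have hlip : LipschitzOnWith K (fun y => e / (y + t) + c) {y : ℝ | a ≤ y + t} := by
    apply LipschitzOnWith.of_dist_le_mul
    intro x hx y hy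
    simp only [mem_setOf_eq] at hx hy
    have hxp : 0 < x + t := lt_of_lt_of_le ha hx
    have hyp : 0 < y + t := lt_of_lt_of_le ha hy
    have hKc : (K : ℝ) = 1 / a ^ 2 := Real.coe_toNNReal _ (by positivity)
    rw [hKc, Real.dist_eq, Real.dist_eq]
    have : e / (x + t) + c - (e / (y + t) + c) = e * ((y - x) / ((x + t) * (y + t))) := by
      field_simp; ring
    rw [this, abs_mul, abs_div, abs_of_pos (by positivity : (0:ℝ) < (x + t) * (y + t))]
    have h1 : |y - x| = |x - y| := abs_sub_comm _ _
    have h2 : a ^ 2 ≤ (x + t) * (y + t) := by nlinarith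
    have h3 : |y - x| / ((x + t) * (y + t)) ≤ |x - y| / a ^ 2 := by
      rw [h1]; exact div_le_div_of_nonneg_left (abs_nonneg _) (by positivity) h2
    calc |e| * (|y - x| / ((x + t) * (y + t))) ≤ 1 * (|x - y| / a ^ 2) :=
          mul_le_mul he h3 (by positivity) zero_le_one
      _ = 1 / a ^ 2 * |x - y| := by ring
  have := (hlip.mono hN).hausdorffMeasure_image_le (zero_le_one (α := ℝ))
  rw [MeasureTheory.hausdorffMeasure_real] at this
  refine le_antisymm ?_ zero_le
  calc volume ((fun y => e / (y + t) + c) '' N) ≤ (K : ℝ≥0∞) ^ (1:ℝ) * volume N := this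
    _ = 0 := by rw [h0, mul_zero]


lemma evar_sub_le (u f : ℝ → ℝ) (s : Set ℝ) :
    eVariationOn (fun x => u x - f x) s ≤ eVariationOn u s + eVariationOn f s := by
  rw [eVariationOn]
  apply iSup_le
  rintro ⟨n, w, hw, ws⟩
  calc ∑ i ∈ Finset.range n, edist (w (i+1) |> fun j => u j - f j) ((w i) |> fun j => u j - f j)
      ≤ ∑ i ∈ Finset.range n,
        (edist (u (w (i+1))) (u (w i)) + edist (f (w (i+1))) (f (w i))) := by
        apply Finset.sum_le_sum
        intro i _
        simp only [edist_dist, Real.dist_eq]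
        rw [← ENNReal.ofReal_add (abs_nonneg _) (abs_nonneg _)]
        apply ENNReal.ofReal_le_ofReal
        have : u (w (i+1)) - f (w (i+1)) - (u (w i) - f (w i))
            = (u (w (i+1)) - u (w i)) - (f (w (i+1)) - f (w i)) := by ring
        rw [this]
        exact abs_sub _ _
    _ = (∑ i ∈ Finset.range n, edist (u (w (i+1))) (u (w i)))
        + ∑ i ∈ Finset.range n, edist (f (w (i+1))) (f (w i)) := Finset.sum_add_distrib
    _ ≤ eVariationOn u s + eVariationOn f s :=
        add_le_add (eVariationOn.sum_le (f := u) (n := n) hw ws) (eVariationOn.sum_le (f := f) (n := n) hw ws)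


lemma T_inv_eq {α : ℝ} (hα : α ∈ Ioo (0:ℝ) 1) {y : ℝ} (hy : y ∈ Ioo (α - 1) α)
    (j : ℕ) (hj : 1 ≤ j) : T α (1 / (y + j)) = y := by
  obtain ⟨hy1, hy2⟩ := hy
  have hjr : (1:ℝ) ≤ (j:ℝ) := by exact_mod_cast hj
  have hpos : 0 < y + j := by nlinarith [hα.1, hα.2]
  have hx0 : 1 / (y + j) ≠ 0 := by positivity
  have hxpos : 0 < 1 / (y + j) := by positivity
  rw [T, if_neg hx0, abs_of_pos hxpos, one_div_one_div]
  have hfloor : ⌊y + j + 1 - α⌋ = (j : ℤ) := by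
    rw [Int.floor_eq_iff]
    constructor
    · push_cast; linarith
    · push_cast; linarith
  rw [hfloor]
  push_cast
  ring

lemma T_inv_mem {α : ℝ} (hα : α ∈ Ioo (0:ℝ) 1) {y : ℝ} (hy : y ∈ Ioo (α - 1) α)
    (j : ℕ) (hj : 1 ≤ j) :
    1 / (y + j) ∈ Ioo (1 / ((j:ℝ) + α)) (1 / ((j:ℝ) + α - 1)) := by
  obtain ⟨hy1, hy2⟩ := hy
  have hjr : (1:ℝ) ≤ (j:ℝ) := by exact_mod_cast hj
  have h1 : (0:ℝ) < (j:ℝ) + α - 1 := by nlinarith [hα.1]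
  have hpos : 0 < y + j := by nlinarith [hα.1]
  constructor
  · exact one_div_lt_one_div_of_lt hpos (by linarith)
  · exact one_div_lt_one_div_of_lt h1 (by linarith)

/-- `T` maps everything (except 0) into `[α-1, α)`. -/
lemma T_mem {α : ℝ} (hα : α ∈ Ioo (0:ℝ) 1) (x : ℝ) : T α x ∈ Icc (α - 1) α := by
  rcases eq_or_ne x 0 with h | h
  · rw [T, if_pos h]; constructor <;> [linarith [hα.2]; linarith [hα.1]]
  · rw [T, if_neg h]
    have h1 : (⌊1 / |x| + 1 - α⌋ : ℝ) ≤ 1 / |x| + 1 - α := Int.floor_le _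
    have h2 : 1 / |x| + 1 - α < ⌊1 / |x| + 1 - α⌋ + 1 := Int.lt_floor_add_one _
    constructor <;> [linarith; linarith]


lemma T_branch {α : ℝ} (hα : α ∈ Ioo (0:ℝ) 1) {x : ℝ} (hx : x ∈ Icc (α - 1) α)
    (hx0 : x ≠ 0) : ∃ j : ℕ, 1 ≤ j ∧ (x = 1 / (T α x + j) ∨ x = -(1 / (T α x + j))) := by
  obtain ⟨hα1, hα2⟩ := hα
  have habs : |x| < 1 := by
    rw [abs_lt]; obtain ⟨h1, h2⟩ := hx; constructor <;> linarith
  have habs0 : 0 < |x| := abs_pos.mpr hx0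
  have hz : 1 < 1 / |x| := by
    rw [lt_div_iff₀ habs0]; linarith
  set z := 1 / |x| with hzdef
  have hfl : 1 ≤ ⌊z + 1 - α⌋ := by
    apply Int.le_floor.mpr; push_cast; linarith
  refine ⟨⌊z + 1 - α⌋.toNat, ?_, ?_⟩
  · omega
  · have hTx : T α x = z - ⌊z + 1 - α⌋ := by rw [T, if_neg hx0]
    have hcast : ((⌊z + 1 - α⌋.toNat : ℕ) : ℝ) = ((⌊z + 1 - α⌋ : ℤ) : ℝ) := by
      exact_mod_cast congrArg (fun n : ℤ => (n : ℝ)) (Int.toNat_of_nonneg (by omega))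
    have hTj : T α x + ((⌊z + 1 - α⌋.toNat : ℕ) : ℝ) = z := by rw [hTx, hcast]; ring
    rw [hTj, hzdef, one_div_one_div]
    rcases abs_cases x with ⟨h, _⟩ | ⟨h, _⟩
    · left; rw [h]
    · right; rw [h]; ring


lemma kdNorm_var_le (α δ : ℝ) (K k : ℕ) (g : ℝ → ℝ) (hk : K ≤ k) (hkpos : (0:ℝ) < k) :
    eVariationOn g (Icc (1 / ((k:ℝ) + α)) α) ≤ kdNorm α K δ g * ENNReal.ofReal ((k:ℝ) ^ δ) := by
  have h1 : (ENNReal.ofReal ((k : ℝ) ^ (-δ)) *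
        (eVariationOn g (Icc (1 / ((k:ℝ) + α)) α)
          + eVariationOn g (Icc (α - 1) (-(1 / ((k:ℝ) + α))))) +
      ENNReal.ofReal (∫ x in Icc (α - 1) (-(1 / ((k:ℝ) + α))) ∪ Icc (1 / ((k:ℝ) + α)) α, |g x|))
      ≤ kdNorm α K δ g := by
    unfold kdNorm
    exact le_iSup_of_le k (le_iSup_of_le hk le_rfl)
  have h2 : ENNReal.ofReal ((k : ℝ) ^ (-δ)) * eVariationOn g (Icc (1 / ((k:ℝ) + α)) α)
      ≤ kdNorm α K δ g := by
    refine le_trans ?_ h1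
    exact le_trans (mul_le_mul_right le_self_add _) le_self_add
  have hone : ENNReal.ofReal ((k:ℝ) ^ δ) * ENNReal.ofReal ((k:ℝ) ^ (-δ)) = 1 := by
    rw [← ENNReal.ofReal_mul (Real.rpow_nonneg hkpos.le δ), ← Real.rpow_add hkpos]
    norm_num
  calc eVariationOn g (Icc (1 / ((k:ℝ) + α)) α)
      = 1 * eVariationOn g (Icc (1 / ((k:ℝ) + α)) α) := (one_mul _).symm
    _ = ENNReal.ofReal ((k:ℝ) ^ δ) *
        (ENNReal.ofReal ((k:ℝ) ^ (-δ)) * eVariationOn g (Icc (1 / ((k:ℝ) + α)) α)) := by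
        rw [← mul_assoc, hone]
    _ ≤ ENNReal.ofReal ((k:ℝ) ^ δ) * kdNorm α K δ g := mul_le_mul_right h2 _
    _ = kdNorm α K δ g * ENNReal.ofReal ((k:ℝ) ^ δ) := mul_comm _ _


lemma core {α δ : ℝ} (hα : α ∈ Ioo (0:ℝ) 1) (hδ : δ ∈ Ioo (0:ℝ) 1) {K : ℕ}
    (hK : 1 / α < K) (u g : ℝ → ℝ) (A : Set ℝ)
    (hA : volume (Icc (α - 1) α \ A) = 0)
    (hgA : ∀ x ∈ A, g x = u (T α x))
    (C : ℝ≥0∞) (hC : C ≠ ⊤)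
    (hbound : ∀ k : ℕ, K ≤ k →
      eVariationOn g (A ∩ Icc (1 / ((k:ℝ) + α)) α) ≤ C * ENNReal.ofReal ((k:ℝ) ^ δ)) :
    ∃ c : ℝ, ∀ᵐ x ∂(volume.restrict (Icc (α - 1) α)), u x = c := by
  obtain ⟨hα1, hα2⟩ := hα
  have hαinv : (1:ℝ) < 1 / α := by rw [lt_div_iff₀ hα1]; linarith
  have hKr : (1:ℝ) < (K:ℝ) := lt_trans hαinv hK
  have hK1 : 1 ≤ K := by exact_mod_cast hKr.le
  -- the full measure set S
  set S : Set ℝ := {y ∈ Ioo (α - 1) α | ∀ j : ℕ, K + 1 ≤ j → 1 / (y + (j:ℝ)) ∈ A} with hS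
  -- basic estimates about cylinders
  have hcyl : ∀ j : ℕ, K + 1 ≤ j → ∀ y ∈ Ioo (α - 1) α,
      0 < y + (j:ℝ) ∧ 1 / ((j:ℝ) + α) < 1 / (y + (j:ℝ)) ∧ 1 / (y + (j:ℝ)) < α := by
    intro j hj y hy
    have hjr : (K:ℝ) + 1 ≤ (j:ℝ) := by exact_mod_cast hj
    have hyj : 0 < y + (j:ℝ) := by nlinarith [hy.1]
    have h2 : 1 / ((j:ℝ) + α) < 1 / (y + (j:ℝ)) :=
      one_div_lt_one_div_of_lt hyj (by linarith [hy.2])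
    refine ⟨hyj, h2, ?_⟩
    have hlt : 1 / α < y + (j:ℝ) := by nlinarith [hy.1]
    have := one_div_lt_one_div_of_lt (by positivity : (0:ℝ) < 1/α) hlt
    rwa [one_div_one_div] at this
  have hSnull : volume (Ioo (α - 1) α \ S) = 0 := by
    refine measure_mono_null (t := ⋃ m : ℕ,
      (fun z => 1 / (z + 0) + -(((K + 1 + m : ℕ):ℝ))) ''
        ((Icc (α - 1) α \ A) ∩ {z : ℝ | 1 / (((K + 1 + m : ℕ):ℝ) + α) ≤ z + 0})) ?_ ?_
    · rintro y ⟨hyI, hyS⟩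
      rw [hS, mem_sep_iff] at hyS
      push_neg at hyS
      obtain ⟨j, hj, hjA⟩ := hyS hyI
      refine mem_iUnion.mpr ⟨j - (K + 1), ?_⟩
      have hjeq : K + 1 + (j - (K + 1)) = j := by omega
      rw [hjeq]
      obtain ⟨hyj, h2, h3⟩ := hcyl j hj y hyI
      refine ⟨1 / (y + (j:ℝ)), ⟨⟨⟨by linarith [one_div_pos.mpr hyj], h3.le⟩, hjA⟩, ?_⟩, ?_⟩
      · simpa using h2.le
      · have : 1 / (1 / (y + (j:ℝ))) = y + (j:ℝ) := one_div_one_div _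
        simp only [add_zero]
        rw [this]; ring
    · apply measure_iUnion_null
      intro m
      apply image_null_aux 1 0 (-(((K + 1 + m : ℕ):ℝ))) (1 / (((K + 1 + m : ℕ):ℝ) + α))
        (by norm_num) (by positivity) inter_subset_right
      exact measure_mono_null inter_subset_left hA
  have hIoovol : volume (Ioo (α - 1) α) ≠ 0 := by
    rw [Real.volume_Ioo]
    simp only [ne_eq, ENNReal.ofReal_eq_zero, not_le]
    linarith
  have hSne : S.Nonempty := by
    rw [nonempty_iff_ne_empty]
    intro hemp
    rw [hemp, diff_empty] at hSnull
    exact hIoovol hSnull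
  obtain ⟨a, haS⟩ := hSne
  have haIoo : a ∈ Ioo (α - 1) α := haS.1
  by_cases hconst : ∀ p ∈ S, u p = u a
  · refine ⟨u a, ?_⟩
    rw [ae_restrict_iff' measurableSet_Icc, ae_iff]
    refine measure_mono_null (t := ({α - 1} ∪ {α}) ∪ (Ioo (α - 1) α \ S)) ?_ ?_
    · intro x hx
      simp only [mem_setOf_eq, not_forall] at hx
      obtain ⟨hxI, hxu⟩ := hx
      by_cases hxIoo : x ∈ Ioo (α - 1) α
      · by_cases hxS : x ∈ S
        · exact absurd (hconst x hxS) hxu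
        · exact Or.inr ⟨hxIoo, hxS⟩
      · left
        simp only [mem_Ioo, not_and_or, not_lt] at hxIoo
        rcases hxIoo with h | h
        · exact Or.inl (mem_singleton_iff.mpr (le_antisymm h hxI.1))
        · exact Or.inr (mem_singleton_iff.mpr (le_antisymm hxI.2 h))
    · refine measure_union_null (measure_union_null ?_ ?_) hSnull <;>
        exact Real.volume_singleton
  · push_neg at hconst
    obtain ⟨b, hbS, hba⟩ := hconst
    have hbIoo : b ∈ Ioo (α - 1) α := hbS.1
    set d : ℝ≥0∞ := edist (u a) (u b) with hd
    have hd0 : d ≠ 0 := by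
      rw [hd, ne_eq, edist_eq_zero]
      exact fun h => hba h.symm
    have hdT : d ≠ ⊤ := edist_ne_top _ _
    have key : ∀ m : ℕ, (m : ℝ≥0∞) * d ≤
        eVariationOn g (A ∩ Icc (1 / (((K + m : ℕ):ℝ) + α)) α) := by
      intro m
      induction m with
      | zero => simp
      | succ m ih =>
        set j : ℕ := K + m + 1 with hj
        have hj1 : 1 ≤ j := by omega
        have hjK : K + 1 ≤ j := by omega
        have hpA : 1 / (a + (j:ℝ)) ∈ A := haS.2 j hjK
        have hqA : 1 / (b + (j:ℝ)) ∈ A := hbS.2 j hjK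
        have hpc := T_inv_mem ⟨hα1, hα2⟩ haIoo j hj1
        have hqc := T_inv_mem ⟨hα1, hα2⟩ hbIoo j hj1
        have hgp : g (1 / (a + (j:ℝ))) = u a := by
          rw [hgA _ hpA, T_inv_eq ⟨hα1, hα2⟩ haIoo j hj1]
        have hgq : g (1 / (b + (j:ℝ))) = u b := by
          rw [hgA _ hqA, T_inv_eq ⟨hα1, hα2⟩ hbIoo j hj1]
        have h1 : d ≤ eVariationOn g (A ∩ Ioo (1 / ((j:ℝ) + α)) (1 / ((j:ℝ) + α - 1))) := by
          have := eVariationOn.edist_le g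
            (s := A ∩ Ioo (1 / ((j:ℝ) + α)) (1 / ((j:ℝ) + α - 1)))
            (x := 1 / (a + (j:ℝ))) (y := 1 / (b + (j:ℝ))) ⟨hpA, hpc⟩ ⟨hqA, hqc⟩
          rwa [hgp, hgq] at this
        have hcast : (j:ℝ) + α - 1 = ((K + m : ℕ):ℝ) + α := by push_cast [hj]; ring
        have hKmpos : (0:ℝ) < ((K + m : ℕ):ℝ) + α := by positivity
        have hjpos : (0:ℝ) < (j:ℝ) + α := by positivity
        have hKmα : 1 / (((K + m : ℕ):ℝ) + α) ≤ α := by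
          have h5 : 1 / α < ((K + m : ℕ):ℝ) + α := by
            have : (K:ℝ) ≤ ((K + m : ℕ):ℝ) := by exact_mod_cast Nat.le_add_right K m
            linarith
          have := one_div_lt_one_div_of_lt (by positivity : (0:ℝ) < 1/α) h5
          rw [one_div_one_div] at this
          exact this.le
        have horder : ∀ x ∈ A ∩ Ioo (1 / ((j:ℝ) + α)) (1 / ((j:ℝ) + α - 1)),
            ∀ y ∈ A ∩ Icc (1 / (((K + m : ℕ):ℝ) + α)) α, x ≤ y := by
          rintro x ⟨-, hx⟩ y ⟨-, hy⟩
          rw [hcast] at hx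
          exact le_trans hx.2.le hy.1
        have hsub : (A ∩ Ioo (1 / ((j:ℝ) + α)) (1 / ((j:ℝ) + α - 1)))
            ∪ (A ∩ Icc (1 / (((K + m : ℕ):ℝ) + α)) α)
            ⊆ A ∩ Icc (1 / ((j:ℝ) + α)) α := by
          rintro x (⟨hxA, hx⟩ | ⟨hxA, hx⟩)
          · rw [hcast] at hx
            exact ⟨hxA, hx.1.le, le_trans hx.2.le hKmα⟩
          · refine ⟨hxA, le_trans ?_ hx.1, hx.2⟩
            apply (one_div_lt_one_div_of_lt hKmpos (by rw [← hcast]; linarith)).le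
        have hcast2 : ((K + (m + 1) : ℕ):ℝ) = (j:ℝ) := by push_cast [hj]; ring
        rw [hcast2]
        calc ((m + 1 : ℕ) : ℝ≥0∞) * d = d + (m : ℝ≥0∞) * d := by push_cast; ring
          _ ≤ eVariationOn g (A ∩ Ioo (1 / ((j:ℝ) + α)) (1 / ((j:ℝ) + α - 1)))
              + eVariationOn g (A ∩ Icc (1 / (((K + m : ℕ):ℝ) + α)) α) := add_le_add h1 ih
          _ ≤ eVariationOn g ((A ∩ Ioo (1 / ((j:ℝ) + α)) (1 / ((j:ℝ) + α - 1)))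
              ∪ (A ∩ Icc (1 / (((K + m : ℕ):ℝ) + α)) α)) := eVariationOn.add_le_union g horder
          _ ≤ eVariationOn g (A ∩ Icc (1 / ((j:ℝ) + α)) α) := eVariationOn.mono g hsub
    set d' : ℝ := d.toReal with hd'
    have hd'pos : 0 < d' := ENNReal.toReal_pos hd0 hdT
    set C' : ℝ := C.toReal with hC'
    have hreal : ∀ m : ℕ, (m:ℝ) * d' ≤ C' * (((K + m : ℕ):ℝ)) ^ δ := by
      intro m
      have h := (key m).trans (hbound (K + m) (Nat.le_add_right K m))
      have hne : C * ENNReal.ofReal (((K + m : ℕ):ℝ) ^ δ) ≠ ⊤ :=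
        ENNReal.mul_ne_top hC ENNReal.ofReal_ne_top
      have h2 := ENNReal.toReal_mono hne h
      rw [ENNReal.toReal_mul, ENNReal.toReal_mul,
        ENNReal.toReal_ofReal (Real.rpow_nonneg (Nat.cast_nonneg _) δ)] at h2
      simpa using h2
    exfalso
    have htend : Tendsto (fun n : ℕ => ((n:ℝ)) ^ (1 - δ)) atTop atTop :=
      (tendsto_rpow_atTop (by linarith [hδ.2] : (0:ℝ) < 1 - δ)).comp tendsto_natCast_atTop_atTop
    obtain ⟨n, hn2, hn1⟩ :=
      ((htend.eventually_gt_atTop (2 * C' / d')).and (eventually_ge_atTop (2 * K))).exists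
    have hKn : K ≤ n := by omega
    have hcast : ((K + (n - K) : ℕ):ℝ) = (n:ℝ) := by
      congr 1; omega
    have h := hreal (n - K)
    rw [hcast, Nat.cast_sub hKn] at h
    have hnr : (2:ℝ) * K ≤ (n:ℝ) := by exact_mod_cast hn1
    have npos : (0:ℝ) < (n:ℝ) := by
      have : (1:ℝ) ≤ (K:ℝ) := by exact_mod_cast hK1
      linarith
    have hδn : (0:ℝ) < (n:ℝ) ^ δ := Real.rpow_pos_of_pos npos δ
    have hsplit : (n:ℝ) = (n:ℝ) ^ δ * (n:ℝ) ^ (1 - δ) := by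
      rw [← Real.rpow_add npos]; norm_num
    have h4 : 2 * C' < (n:ℝ) ^ (1 - δ) * d' := by
      rw [div_lt_iff₀ hd'pos] at hn2
      linarith
    have h6 : (n:ℝ) * d' = (n:ℝ) ^ δ * ((n:ℝ) ^ (1 - δ) * d') := by
      rw [← mul_assoc, ← hsplit]
    have h7 := mul_lt_mul_of_pos_left h4 hδn
    have h8 : ((n:ℝ) - K) * d' ≥ ((n:ℝ) / 2) * d' := by nlinarith
    nlinarith [h, h7, h6, h8]


/-- for `α ∈ (0,1)`, `0 < δ < 1` and `K` large, if `u ∈ B_{K,δ}` is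
real-valued and `u ∘ T_α ∈ B_{K,δ}`, then `u` is constant a.e.; in particular the
cohomological equation `f = u - u ∘ T_α` with `f, u ∈ B_{K,δ}` forces `f` to be a.e.
constant. -/
theorem BKdelta_cohomological (α : ℝ) (hα : α ∈ Ioo (0:ℝ) 1)
    (δ : ℝ) (hδ : δ ∈ Ioo (0:ℝ) 1) (K : ℕ) (hK : max (1 / α) (1 / (1 - α)) < K) :
    (∀ u : ℝ → ℝ, kdNorm α K δ u ≠ ⊤ → kdNorm α K δ (u ∘ T α) ≠ ⊤ →
      ∃ c : ℝ, ∀ᵐ x ∂(volume.restrict (Icc (α - 1) α)), u x = c) ∧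
    (∀ f u : ℝ → ℝ, kdNorm α K δ f ≠ ⊤ → kdNorm α K δ u ≠ ⊤ →
      (∀ᵐ x ∂(volume.restrict (Icc (α - 1) α)), f x = u x - u (T α x)) →
      ∃ c : ℝ, ∀ᵐ x ∂(volume.restrict (Icc (α - 1) α)), f x = c) := by
  have hKα : 1 / α < (K:ℝ) := lt_of_le_of_lt (le_max_left _ _) hK
  have hKpos : (0:ℝ) < (K:ℝ) := lt_trans (one_div_pos.mpr hα.1) hKα
  have hkpos : ∀ k : ℕ, K ≤ k → (0:ℝ) < (k:ℝ) := by
    intro k hk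
    exact lt_of_lt_of_le hKpos (by exact_mod_cast hk)
  constructor
  · -- Part 1
    intro u hu huT
    apply core hα hδ hKα u (u ∘ T α) (Icc (α - 1) α) (by simp)
      (fun x _ => rfl) (kdNorm α K δ (u ∘ T α)) huT
    intro k hk
    calc eVariationOn (u ∘ T α) (Icc (α - 1) α ∩ Icc (1 / ((k:ℝ) + α)) α)
        ≤ eVariationOn (u ∘ T α) (Icc (1 / ((k:ℝ) + α)) α) :=
          eVariationOn.mono _ inter_subset_right
      _ ≤ kdNorm α K δ (u ∘ T α) * ENNReal.ofReal ((k:ℝ) ^ δ) :=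
          kdNorm_var_le α δ K k _ hk (hkpos k hk)
  · -- Part 2
    intro f u hf hu hae
    set A : Set ℝ := {x ∈ Icc (α - 1) α | f x = u x - u (T α x)} with hA
    have hAnull : volume (Icc (α - 1) α \ A) = 0 := by
      have h1 := (ae_restrict_iff' measurableSet_Icc).mp hae
      rw [ae_iff] at h1
      refine measure_mono_null ?_ h1
      rintro x ⟨hxI, hxA⟩
      simp only [mem_setOf_eq, not_forall]
      exact ⟨hxI, fun h => hxA ⟨hxI, h⟩⟩
    have hcore := core hα hδ hKα u (fun x => u x - f x) A hAnull
      (fun x hx => by show u x - f x = u (T α x); have h2 := hx.2; linarith)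
      (kdNorm α K δ u + kdNorm α K δ f) (ENNReal.add_ne_top.mpr ⟨hu, hf⟩)
      (by
        intro k hk
        calc eVariationOn (fun x => u x - f x) (A ∩ Icc (1 / ((k:ℝ) + α)) α)
            ≤ eVariationOn (fun x => u x - f x) (Icc (1 / ((k:ℝ) + α)) α) :=
              eVariationOn.mono _ inter_subset_right
          _ ≤ eVariationOn u (Icc (1 / ((k:ℝ) + α)) α)
              + eVariationOn f (Icc (1 / ((k:ℝ) + α)) α) := evar_sub_le u f _
          _ ≤ kdNorm α K δ u * ENNReal.ofReal ((k:ℝ) ^ δ)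
              + kdNorm α K δ f * ENNReal.ofReal ((k:ℝ) ^ δ) :=
              add_le_add (kdNorm_var_le α δ K k u hk (hkpos k hk))
                (kdNorm_var_le α δ K k f hk (hkpos k hk))
          _ = (kdNorm α K δ u + kdNorm α K δ f) * ENNReal.ofReal ((k:ℝ) ^ δ) :=
              (add_mul _ _ _).symm)
    obtain ⟨c, hc⟩ := hcore
    -- the set where u differs from c is null
    have hN : volume {y : ℝ | y ∈ Icc (α - 1) α ∧ u y ≠ c} = 0 := by
      have h1 := (ae_restrict_iff' measurableSet_Icc).mp hc
      rw [ae_iff] at h1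
      refine measure_mono_null ?_ h1
      intro y hy
      simp only [mem_setOf_eq, not_forall]
      exact ⟨hy.1, hy.2⟩
    -- hence u ∘ T = c a.e. on the interval
    have hTc : ∀ᵐ x ∂(volume.restrict (Icc (α - 1) α)), u (T α x) = c := by
      rw [ae_restrict_iff' measurableSet_Icc, ae_iff]
      set N : Set ℝ := {y : ℝ | y ∈ Icc (α - 1) α ∧ u y ≠ c} with hNdef
      refine measure_mono_null (t := {(0:ℝ)} ∪
        ((⋃ j : ℕ, (fun y => 1 / (y + (((j + 1 : ℕ)):ℝ)) + 0) ''
            (N ∩ {y : ℝ | α ≤ y + (((j + 1 : ℕ)):ℝ)})) ∪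
         (⋃ j : ℕ, (fun y => (-1) / (y + (((j + 1 : ℕ)):ℝ)) + 0) ''
            (N ∩ {y : ℝ | α ≤ y + (((j + 1 : ℕ)):ℝ)})))) ?_ ?_
      · intro x hx
        simp only [mem_setOf_eq, not_forall] at hx
        obtain ⟨hxI, hxu⟩ := hx
        rcases eq_or_ne x 0 with h0 | h0
        · exact Or.inl (mem_singleton_iff.mpr h0)
        · right
          have hyI : T α x ∈ Icc (α - 1) α := T_mem hα x
          have hyN : T α x ∈ N := ⟨hyI, hxu⟩
          obtain ⟨j, hj1, hbr⟩ := T_branch hα hxI h0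
          have hjeq : j - 1 + 1 = j := by omega
          have hset : T α x ∈ {y : ℝ | α ≤ y + (((j - 1 + 1 : ℕ)):ℝ)} := by
            rw [hjeq]
            have : (1:ℝ) ≤ (j:ℝ) := by exact_mod_cast hj1
            have := hyI.1
            simp only [mem_setOf_eq]
            linarith
          rcases hbr with hbr | hbr
          · left
            refine mem_iUnion.mpr ⟨j - 1, ⟨T α x, ⟨hyN, hset⟩, ?_⟩⟩
            rw [hjeq]
            simp only [add_zero]
            exact hbr.symm
          · right
            refine mem_iUnion.mpr ⟨j - 1, ⟨T α x, ⟨hyN, hset⟩, ?_⟩⟩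
            rw [hjeq]
            simp only [add_zero, neg_div, ← neg_eq_iff_eq_neg]
            rw [← hbr]
      · refine measure_union_null Real.volume_singleton (measure_union_null ?_ ?_)
        · refine measure_iUnion_null fun j => ?_
          exact image_null_aux 1 (((j + 1 : ℕ)):ℝ) 0 α (by norm_num) hα.1
            inter_subset_right (measure_mono_null inter_subset_left hN)
        · refine measure_iUnion_null fun j => ?_
          exact image_null_aux (-1) (((j + 1 : ℕ)):ℝ) 0 α (by norm_num) hα.1
            inter_subset_right (measure_mono_null inter_subset_left hN)
    refine ⟨0, ?_⟩
    filter_upwards [hae, hc, hTc] with x h1 h2 h3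
    rw [h1, h2, h3, sub_self]
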